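/- arXiv:1109.5400 — 10 statements merged into one kernel-verified Lean document; each statement's English description precedes it below -/
import Mathlib

section
/- Let Ψ be strictly decreasing and nonnegative on I = (a,b) and f be Ψ-concave on I. Then the one-sided generalized derivatives D⁺_Ψ f and D⁻_Ψ f are increasing functions on I; more precisely, for all w < z in I, D⁻_Ψ f(w) ≤ D⁺_Ψ f(w) ≤ D⁻_Ψ f(z) ≤ D⁺_Ψ f(z). -/
open Set Filter Topology

def PsiConcaveOn (Ψ f : ℝ → ℝ) (a b : ℝ) : Prop :=
  ∀ x y z : ℝ, x ∈ Set.Ioo a b → y ∈ Set.Ioo a b → z ∈ Set.Ioo a b →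
    x < y → y < z →
    (f x - f y) / (Ψ x - Ψ y) ≤ (f y - f z) / (Ψ y - Ψ z)

lemma slope_sym (Ψ f : ℝ → ℝ) (u v : ℝ) :
    (f u - f v) / (Ψ u - Ψ v) = (f v - f u) / (Ψ v - Ψ u) := by
  rw [← neg_div_neg_eq]; congr 1 <;> ring

lemma chord_left (a b : ℝ) (Ψ f : ℝ → ℝ)
    (hΨanti : StrictAntiOn Ψ (Set.Ioo a b)) (hf : PsiConcaveOn Ψ f a b)
    {x y z : ℝ} (hx : x ∈ Set.Ioo a b) (hy : y ∈ Set.Ioo a b) (hz : z ∈ Set.Ioo a b)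
    (hxy : x < y) (hyz : y < z) :
    (f x - f y) / (Ψ x - Ψ y) ≤ (f x - f z) / (Ψ x - Ψ z) := by
  have hp : Ψ y < Ψ x := hΨanti hx hy hxy
  have hq : Ψ z < Ψ y := hΨanti hy hz hyz
  have hp0 : (0:ℝ) < Ψ x - Ψ y := by linarith
  have hq0 : (0:ℝ) < Ψ y - Ψ z := by linarith
  have hr0 : (0:ℝ) < Ψ x - Ψ z := by linarith
  have hAB := hf x y z hx hy hz hxy hyz
  have h := (div_le_div_iff₀ hp0 hq0).mp hAB
  rw [div_le_div_iff₀ hp0 hr0]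
  nlinarith [h]

lemma DmDp (a b : ℝ) (Ψ f Dm Dp : ℝ → ℝ)
    (hΨanti : StrictAntiOn Ψ (Set.Ioo a b))
    (hf : PsiConcaveOn Ψ f a b)
    (hDm : ∀ y ∈ Set.Ioo a b,
      Tendsto (fun x => (f x - f y) / (Ψ x - Ψ y)) (𝓝[Set.Ioo a y] y) (𝓝 (Dm y)))
    (hDp : ∀ y ∈ Set.Ioo a b,
      Tendsto (fun x => (f x - f y) / (Ψ x - Ψ y)) (𝓝[Set.Ioo y b] y) (𝓝 (Dp y)))
    {w : ℝ} (hw : w ∈ Set.Ioo a b) : Dm w ≤ Dp w := by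
  haveI : (𝓝[Set.Ioo a w] w).NeBot := right_nhdsWithin_Ioo_neBot hw.1
  haveI : (𝓝[Set.Ioo w b] w).NeBot := left_nhdsWithin_Ioo_neBot hw.2
  refine ge_of_tendsto (hDp w hw) ?_
  filter_upwards [self_mem_nhdsWithin] with x hx
  have hxI : x ∈ Set.Ioo a b := ⟨lt_trans hw.1 hx.1, hx.2⟩
  -- Dm w ≤ slope w x
  refine le_of_tendsto (hDm w hw) ?_
  filter_upwards [self_mem_nhdsWithin] with t ht
  have htI : t ∈ Set.Ioo a b := ⟨ht.1, lt_trans ht.2 hw.2⟩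
  have := hf t w x htI hw hxI ht.2 hx.1
  rwa [slope_sym Ψ f w x] at this

theorem stmt_2 (a b : ℝ) (Ψ f Dm Dp : ℝ → ℝ)
    (hΨanti : StrictAntiOn Ψ (Set.Ioo a b))
    (hΨpos : ∀ x ∈ Set.Ioo a b, 0 ≤ Ψ x)
    (hf : PsiConcaveOn Ψ f a b)
    (hDm : ∀ y ∈ Set.Ioo a b,
      Tendsto (fun x => (f x - f y) / (Ψ x - Ψ y)) (𝓝[Set.Ioo a y] y) (𝓝 (Dm y)))
    (hDp : ∀ y ∈ Set.Ioo a b,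
      Tendsto (fun x => (f x - f y) / (Ψ x - Ψ y)) (𝓝[Set.Ioo y b] y) (𝓝 (Dp y))) :
    ∀ w ∈ Set.Ioo a b, ∀ z ∈ Set.Ioo a b, w < z →
      Dm w ≤ Dp w ∧ Dp w ≤ Dm z ∧ Dm z ≤ Dp z := by
  intro w hw z hz hwz
  refine ⟨DmDp a b Ψ f Dm Dp hΨanti hf hDm hDp hw, ?_, DmDp a b Ψ f Dm Dp hΨanti hf hDm hDp hz⟩
  set m := (w + z) / 2 with hm
  have hwm : w < m := by simp [hm]; linarith
  have hmz : m < z := by simp [hm]; linarith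
  have hmI : m ∈ Set.Ioo a b := ⟨lt_trans hw.1 hwm, lt_trans hmz hz.2⟩
  haveI : (𝓝[Set.Ioo w b] w).NeBot := left_nhdsWithin_Ioo_neBot hw.2
  haveI : (𝓝[Set.Ioo a z] z).NeBot := right_nhdsWithin_Ioo_neBot hz.1
  have key1 : Dp w ≤ (f w - f m) / (Ψ w - Ψ m) := by
    refine le_of_tendsto (hDp w hw) ?_
    have hev : ∀ᶠ x in 𝓝[Set.Ioo w b] w, x < m :=
      eventually_nhdsWithin_of_eventually_nhds (eventually_lt_nhds hwm)
    filter_upwards [self_mem_nhdsWithin, hev] with x hx hxm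
    have hxI : x ∈ Set.Ioo a b := ⟨lt_trans hw.1 hx.1, hx.2⟩
    have := chord_left a b Ψ f hΨanti hf hw hxI hmI hx.1 hxm
    rwa [slope_sym Ψ f w x] at this
  have key2 : (f w - f m) / (Ψ w - Ψ m) ≤ Dm z := by
    refine ge_of_tendsto (hDm z hz) ?_
    have hev : ∀ᶠ x in 𝓝[Set.Ioo a z] z, m < x :=
      eventually_nhdsWithin_of_eventually_nhds (eventually_gt_nhds hmz)
    filter_upwards [self_mem_nhdsWithin, hev] with x hx hmx
    have hxI : x ∈ Set.Ioo a b := ⟨hx.1, lt_trans hx.2 hz.2⟩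
    have h1 := hf w m x hw hmI hxI hwm hmx
    have h2 := hf m x z hmI hxI hz hmx hx.2
    linarith
  linarith
end

section
/- Let Ψ be strictly decreasing, nonnegative and right-continuous on I = (a,b), and let f be Ψ-concave on I. Then D⁺_Ψ f is right-continuous on I. -/
open Set Filter Topology

lemma mediant_aux {n1 n2 d1 d2 : ℝ} (h1 : 0 < d1) (h2 : 0 < d2) (h : n1/d1 ≤ n2/d2) :
    n1/d1 ≤ (n1+n2)/(d1+d2) ∧ (n1+n2)/(d1+d2) ≤ n2/d2 := by
  rw [div_le_div_iff₀ h1 h2] at h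
  constructor
  · rw [div_le_div_iff₀ h1 (by linarith)]; nlinarith
  · rw [div_le_div_iff₀ (by linarith) h2]; nlinarith

lemma slope_symm (Ψ f : ℝ → ℝ) (p q : ℝ) :
    (f p - f q)/(Ψ p - Ψ q) = (f q - f p)/(Ψ q - Ψ p) := by
  rw [show f p - f q = -(f q - f p) by ring, show Ψ p - Ψ q = -(Ψ q - Ψ p) by ring,
    neg_div_neg_eq]

lemma slope_three (a b : ℝ) (Ψ f : ℝ → ℝ) (hΨanti : StrictAntiOn Ψ (Set.Ioo a b))
    (hf : PsiConcaveOn Ψ f a b) {u v w : ℝ} (hu : u ∈ Set.Ioo a b) (hv : v ∈ Set.Ioo a b)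
    (hw : w ∈ Set.Ioo a b) (huv : u < v) (hvw : v < w) :
    (f u - f v)/(Ψ u - Ψ v) ≤ (f u - f w)/(Ψ u - Ψ w) ∧
    (f u - f w)/(Ψ u - Ψ w) ≤ (f v - f w)/(Ψ v - Ψ w) := by
  have d1 : 0 < Ψ u - Ψ v := sub_pos.2 (hΨanti hu hv huv)
  have d2 : 0 < Ψ v - Ψ w := sub_pos.2 (hΨanti hv hw hvw)
  have h := hf u v w hu hv hw huv hvw
  have h2 := mediant_aux d1 d2 h
  have e1 : f u - f w = (f u - f v) + (f v - f w) := by ring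
  have e2 : Ψ u - Ψ w = (Ψ u - Ψ v) + (Ψ v - Ψ w) := by ring
  rw [e1, e2]; exact h2

lemma neBot_Ioo_aux {p b : ℝ} (h : p < b) : (𝓝[Set.Ioo p b] p).NeBot := by
  rw [nhdsWithin_Ioo_eq_nhdsGT h]
  exact nhdsGT_neBot p

theorem stmt_3 (a b : ℝ) (Ψ f Dp : ℝ → ℝ)
    (hΨanti : StrictAntiOn Ψ (Set.Ioo a b))
    (hΨpos : ∀ x ∈ Set.Ioo a b, 0 ≤ Ψ x)
    (hΨrc : ∀ y ∈ Set.Ioo a b, Tendsto Ψ (𝓝[Set.Ioo y b] y) (𝓝 (Ψ y)))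
    (hf : PsiConcaveOn Ψ f a b)
    (hDp : ∀ y ∈ Set.Ioo a b,
      Tendsto (fun x => (f x - f y) / (Ψ x - Ψ y)) (𝓝[Set.Ioo y b] y) (𝓝 (Dp y))) :
    ∀ y ∈ Set.Ioo a b, Tendsto Dp (𝓝[Set.Ioo y b] y) (𝓝 (Dp y)) := by
  -- Step A : Dp p ≤ slope z p for z ∈ Ioo p b
  have hA : ∀ p ∈ Set.Ioo a b, ∀ z ∈ Set.Ioo p b,
      Dp p ≤ (f z - f p)/(Ψ z - Ψ p) := by
    intro p hp z hz
    haveI := neBot_Ioo_aux hp.2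
    refine le_of_tendsto (hDp p hp) ?_
    have hzlt : ∀ᶠ x in 𝓝[Set.Ioo p b] p, x < z :=
      Filter.Eventually.filter_mono nhdsWithin_le_nhds (eventually_lt_nhds hz.1)
    filter_upwards [hzlt, eventually_mem_nhdsWithin] with x hxz hx
    have hxI : x ∈ Set.Ioo a b := ⟨hp.1.trans hx.1, hx.2⟩
    have hzI : z ∈ Set.Ioo a b := ⟨hp.1.trans hz.1, hz.2⟩
    rw [slope_symm, slope_symm Ψ f z p]
    exact (slope_three a b Ψ f hΨanti hf hp hxI hzI hx.1 hxz).1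
  intro y hy
  haveI := neBot_Ioo_aux hy.2
  -- f is right continuous at y
  have hΨt : Tendsto (fun x => Ψ x - Ψ y) (𝓝[Set.Ioo y b] y) (𝓝 0) := by
    have := (hΨrc y hy).sub (tendsto_const_nhds (x := Ψ y))
    simpa using this
  have hfrc : Tendsto f (𝓝[Set.Ioo y b] y) (𝓝 (f y)) := by
    have h1 : Tendsto (fun x => (f x - f y)/(Ψ x - Ψ y) * (Ψ x - Ψ y) + f y)
        (𝓝[Set.Ioo y b] y) (𝓝 (Dp y * 0 + f y)) :=
      ((hDp y hy).mul hΨt).add tendsto_const_nhds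
    rw [show Dp y * 0 + f y = f y by ring] at h1
    refine h1.congr' ?_
    filter_upwards [eventually_mem_nhdsWithin] with x hx
    have hxI : x ∈ Set.Ioo a b := ⟨hy.1.trans hx.1, hx.2⟩
    have hne : Ψ x - Ψ y ≠ 0 := sub_ne_zero.2 (ne_of_lt (hΨanti hy hxI hx.1))
    field_simp
    ring
  rw [tendsto_order]
  constructor
  · intro c hc
    filter_upwards [eventually_mem_nhdsWithin] with y' hy'
    refine hc.trans_le ?_
    have hy'I : y' ∈ Set.Ioo a b := ⟨hy.1.trans hy'.1, hy'.2⟩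
    haveI := neBot_Ioo_aux hy'I.2
    refine ge_of_tendsto (hDp y' hy'I) ?_
    filter_upwards [eventually_mem_nhdsWithin] with z hz
    have hzI : z ∈ Set.Ioo a b := ⟨hy'I.1.trans hz.1, hz.2⟩
    have h1 : Dp y ≤ (f z - f y)/(Ψ z - Ψ y) := hA y hy z ⟨hy'.1.trans hz.1, hz.2⟩
    rw [slope_symm Ψ f z y] at h1
    have h2 := (slope_three a b Ψ f hΨanti hf hy hy'I hzI hy'.1 hz.1).2
    calc Dp y ≤ (f y - f z)/(Ψ y - Ψ z) := h1
      _ ≤ (f y' - f z)/(Ψ y' - Ψ z) := h2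
      _ = (f z - f y')/(Ψ z - Ψ y') := slope_symm Ψ f y' z
  · intro c hc
    obtain ⟨z, hzc, hz⟩ :=
      (((hDp y hy).eventually_lt_const hc).and eventually_mem_nhdsWithin).exists
    have hzI : z ∈ Set.Ioo a b := ⟨hy.1.trans hz.1, hz.2⟩
    have hΨne : Ψ y - Ψ z ≠ 0 := sub_ne_zero.2 (ne_of_gt (hΨanti hy hzI hz.1))
    have hcont : Tendsto (fun y' => (f y' - f z)/(Ψ y' - Ψ z)) (𝓝[Set.Ioo y b] y)
        (𝓝 ((f y - f z)/(Ψ y - Ψ z))) :=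
      (hfrc.sub tendsto_const_nhds).div ((hΨrc y hy).sub tendsto_const_nhds) hΨne
    rw [slope_symm Ψ f z y] at hzc
    have hev2 := hcont.eventually_lt_const hzc
    have hltz : ∀ᶠ y' in 𝓝[Set.Ioo y b] y, y' < z :=
      Filter.Eventually.filter_mono nhdsWithin_le_nhds (eventually_lt_nhds hz.1)
    filter_upwards [hev2, hltz, eventually_mem_nhdsWithin] with y' h1 h2 h3
    have hy'I : y' ∈ Set.Ioo a b := ⟨hy.1.trans h3.1, h3.2⟩
    have h4 := hA y' hy'I z ⟨h2, hz.2⟩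
    rw [slope_symm Ψ f z y'] at h4
    exact lt_of_le_of_lt h4 h1
end

section
/- Let Ψ be strictly decreasing and nonnegative on I = (a,b). If Ψ is Lipschitz continuous on I, then every Ψ-concave function on I is Lipschitz continuous on each compact subinterval [c,d] ⊂ I; more precisely, there is a constant K (depending on c, d) with |f(x)-f(y)| ≤ K|Ψ(x)-Ψ(y)| for all x, y ∈ [c,d]. -/
open Set Filter Topology

private lemma mediant_left {u1 v1 u2 v2 : ℝ} (hv1 : 0 < v1) (hv2 : 0 < v2)
    (h : u1 / v1 ≤ u2 / v2) : u1 / v1 ≤ (u1 + u2) / (v1 + v2) := by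
  rw [div_le_div_iff₀ hv1 hv2] at h
  rw [div_le_div_iff₀ hv1 (by linarith)]
  nlinarith

private lemma mediant_right {u1 v1 u2 v2 : ℝ} (hv1 : 0 < v1) (hv2 : 0 < v2)
    (h : u1 / v1 ≤ u2 / v2) : (u1 + u2) / (v1 + v2) ≤ u2 / v2 := by
  rw [div_le_div_iff₀ hv1 hv2] at h
  rw [div_le_div_iff₀ (by linarith) hv2]
  nlinarith

theorem stmt_4 (a b : ℝ) (Ψ f : ℝ → ℝ) (L : ℝ)
    (hΨanti : StrictAntiOn Ψ (Set.Ioo a b))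
    (hΨpos : ∀ x ∈ Set.Ioo a b, 0 ≤ Ψ x)
    (hΨlip : ∀ x ∈ Set.Ioo a b, ∀ y ∈ Set.Ioo a b, |Ψ x - Ψ y| ≤ L * |x - y|)
    (hf : PsiConcaveOn Ψ f a b) :
    ∀ c d : ℝ, a < c → c ≤ d → d < b →
      ∃ K : ℝ, (∀ x ∈ Set.Icc c d, ∀ y ∈ Set.Icc c d, |f x - f y| ≤ K * |Ψ x - Ψ y|) ∧
        ∀ x ∈ Set.Icc c d, ∀ y ∈ Set.Icc c d, |f x - f y| ≤ K * L * |x - y| := by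
  intro c d hac hcd hdb
  set c' : ℝ := (a + c) / 2 with hc'def
  set d' : ℝ := (d + b) / 2 with hd'def
  have hc'lt : c' < c := by simp [hc'def]; linarith
  have hdd' : d < d' := by simp [hd'def]; linarith
  have hc'mem : c' ∈ Set.Ioo a b := ⟨by simp [hc'def]; linarith, by simp [hc'def]; linarith⟩
  have hd'mem : d' ∈ Set.Ioo a b := ⟨by simp [hd'def]; linarith, by simp [hd'def]; linarith⟩
  have hcmem : c ∈ Set.Ioo a b := ⟨hac, by linarith⟩
  have hdmem : d ∈ Set.Ioo a b := ⟨by linarith, hdb⟩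
  have hsub : ∀ x ∈ Set.Icc c d, x ∈ Set.Ioo a b := fun x hx =>
    ⟨lt_of_lt_of_le hac hx.1, lt_of_le_of_lt hx.2 hdb⟩
  have hD : ∀ x ∈ Set.Ioo a b, ∀ y ∈ Set.Ioo a b, x < y → 0 < Ψ x - Ψ y :=
    fun x hx y hy hxy => sub_pos.2 (hΨanti hx hy hxy)
  set m : ℝ := (f c' - f c) / (Ψ c' - Ψ c) with hmdef
  set M : ℝ := (f d - f d') / (Ψ d - Ψ d') with hMdef
  -- lower bound on slopes
  have hlow : ∀ x ∈ Set.Icc c d, ∀ y ∈ Set.Icc c d, x < y →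
      m ≤ (f x - f y) / (Ψ x - Ψ y) := by
    intro x hx y hy hxy
    have hx' := hsub x hx
    have hy' := hsub y hy
    have hc'x : c' < x := lt_of_lt_of_le hc'lt hx.1
    have step1 : (f c' - f x) / (Ψ c' - Ψ x) ≤ (f x - f y) / (Ψ x - Ψ y) :=
      hf c' x y hc'mem hx' hy' hc'x hxy
    refine le_trans ?_ step1
    rcases eq_or_lt_of_le hx.1 with h | h
    · rw [hmdef, h]
    · have h1 : (f c' - f c) / (Ψ c' - Ψ c) ≤ (f c - f x) / (Ψ c - Ψ x) :=
        hf c' c x hc'mem hcmem hx' hc'lt h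
      have := mediant_left (hD c' hc'mem c hcmem hc'lt) (hD c hcmem x hx' h) h1
      have e1 : (f c' - f c) + (f c - f x) = f c' - f x := by ring
      have e2 : (Ψ c' - Ψ c) + (Ψ c - Ψ x) = Ψ c' - Ψ x := by ring
      rwa [e1, e2] at this
  -- upper bound on slopes
  have hup : ∀ x ∈ Set.Icc c d, ∀ y ∈ Set.Icc c d, x < y →
      (f x - f y) / (Ψ x - Ψ y) ≤ M := by
    intro x hx y hy hxy
    have hx' := hsub x hx
    have hy' := hsub y hy
    have hyd' : y < d' := lt_of_le_of_lt hy.2 hdd'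
    have step1 : (f x - f y) / (Ψ x - Ψ y) ≤ (f y - f d') / (Ψ y - Ψ d') :=
      hf x y d' hx' hy' hd'mem hxy hyd'
    refine le_trans step1 ?_
    rcases eq_or_lt_of_le hy.2 with h | h
    · rw [hMdef, h]
    · have h1 : (f y - f d) / (Ψ y - Ψ d) ≤ (f d - f d') / (Ψ d - Ψ d') :=
        hf y d d' hy' hdmem hd'mem h hdd'
      have := mediant_right (hD y hy' d hdmem h) (hD d hdmem d' hd'mem hdd') h1
      have e1 : (f y - f d) + (f d - f d') = f y - f d' := by ring
      have e2 : (Ψ y - Ψ d) + (Ψ d - Ψ d') = Ψ y - Ψ d' := by ring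
      rwa [e1, e2] at this
  set K : ℝ := max |m| |M| with hKdef
  have hK0 : 0 ≤ K := le_trans (abs_nonneg m) (le_max_left _ _)
  have key : ∀ x ∈ Set.Icc c d, ∀ y ∈ Set.Icc c d, |f x - f y| ≤ K * |Ψ x - Ψ y| := by
    have main : ∀ x ∈ Set.Icc c d, ∀ y ∈ Set.Icc c d, x < y →
        |f x - f y| ≤ K * |Ψ x - Ψ y| := by
      intro x hx y hy hxy
      have hd0 : 0 < Ψ x - Ψ y := hD x (hsub x hx) y (hsub y hy) hxy
      have hS : |(f x - f y) / (Ψ x - Ψ y)| ≤ K := by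
        rw [abs_le]
        constructor
        · have := hlow x hx y hy hxy
          have : -|m| ≤ (f x - f y) / (Ψ x - Ψ y) := le_trans (neg_abs_le m) this
          refine le_trans (neg_le_neg (le_max_left |m| |M|)) this
        · exact le_trans (hup x hx y hy hxy) (le_trans (le_abs_self M) (le_max_right _ _))
      have heq : f x - f y = ((f x - f y) / (Ψ x - Ψ y)) * (Ψ x - Ψ y) :=
        (div_mul_cancel₀ _ (ne_of_gt hd0)).symm
      calc |f x - f y| = |(f x - f y) / (Ψ x - Ψ y)| * |Ψ x - Ψ y| := by
            conv_lhs => rw [heq]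
            rw [abs_mul]
        _ ≤ K * |Ψ x - Ψ y| := mul_le_mul_of_nonneg_right hS (abs_nonneg _)
    intro x hx y hy
    rcases lt_trichotomy x y with h | h | h
    · exact main x hx y hy h
    · simp [h, hK0, mul_nonneg hK0 (abs_nonneg _)]
    · rw [abs_sub_comm (f x), abs_sub_comm (Ψ x)]
      exact main y hy x hx h
  refine ⟨K, key, ?_⟩
  intro x hx y hy
  calc |f x - f y| ≤ K * |Ψ x - Ψ y| := key x hx y hy
    _ ≤ K * (L * |x - y|) :=
        mul_le_mul_of_nonneg_left (hΨlip x (hsub x hx) y (hsub y hy)) hK0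
    _ = K * L * |x - y| := by ring
end

section
/- Let Ψ be strictly decreasing and nonnegative on I = (a,b) and f be Ψ-concave on I. If D⁺_Ψ f(x) ≥ 0 for all x ∈ I, then f is decreasing on I. If D⁺_Ψ f(x) ≤ 0 for all x ∈ I, then f is increasing on I. -/
open Set Filter Topology

lemma slope_flip (g h : ℝ → ℝ) (u v : ℝ) :
    (g u - g v) / (h u - h v) = (g v - g u) / (h v - h u) := by
  rw [← neg_div_neg_eq]; ring_nf

theorem stmt_5 (a b : ℝ) (Ψ f Dp : ℝ → ℝ)
    (hΨanti : StrictAntiOn Ψ (Set.Ioo a b))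
    (hΨpos : ∀ x ∈ Set.Ioo a b, 0 ≤ Ψ x)
    (hf : PsiConcaveOn Ψ f a b)
    (hDp : ∀ y ∈ Set.Ioo a b,
      Tendsto (fun x => (f x - f y) / (Ψ x - Ψ y)) (𝓝[Set.Ioo y b] y) (𝓝 (Dp y))) :
    ((∀ x ∈ Set.Ioo a b, 0 ≤ Dp x) → AntitoneOn f (Set.Ioo a b)) ∧
    ((∀ x ∈ Set.Ioo a b, Dp x ≤ 0) → MonotoneOn f (Set.Ioo a b)) := by
  -- key: for x < z in Ioo a b, Dp x ≤ S x z and S x z ≤ Dp z,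
  -- where S x z = (f x - f z)/(Ψ x - Ψ z), and Ψ x - Ψ z > 0.
  have hSle : ∀ x ∈ Set.Ioo a b, ∀ z ∈ Set.Ioo a b, x < z →
      Dp x ≤ (f x - f z) / (Ψ x - Ψ z) := by
    intro x hx z hz hxz
    have hne : (𝓝[Set.Ioo x b] x).NeBot := by
      rw [nhdsWithin_Ioo_eq_nhdsGT hx.2]
      infer_instance
    refine le_of_tendsto (hDp x hx) ?_
    filter_upwards [self_mem_nhdsWithin,
      mem_nhdsWithin_of_mem_nhds (Iio_mem_nhds hxz)] with t ht htz
    have htmem : t ∈ Set.Ioo a b := ⟨lt_trans hx.1 ht.1, ht.2⟩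
    have hp : 0 < Ψ x - Ψ t := sub_pos.mpr (hΨanti hx htmem ht.1)
    have hq : 0 < Ψ t - Ψ z := sub_pos.mpr (hΨanti htmem hz htz)
    have h := hf x t z hx htmem hz ht.1 htz
    rw [div_le_div_iff₀ hp hq] at h
    rw [slope_flip f Ψ t x]
    rw [div_le_div_iff₀ hp (by linarith : (0:ℝ) < Ψ x - Ψ z)]
    nlinarith
  have hSge : ∀ x ∈ Set.Ioo a b, ∀ z ∈ Set.Ioo a b, x < z →
      (f x - f z) / (Ψ x - Ψ z) ≤ Dp z := by
    intro x hx z hz hxz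
    have hne : (𝓝[Set.Ioo z b] z).NeBot := by
      rw [nhdsWithin_Ioo_eq_nhdsGT hz.2]
      infer_instance
    refine ge_of_tendsto (hDp z hz) ?_
    filter_upwards [self_mem_nhdsWithin] with w hw
    have hwmem : w ∈ Set.Ioo a b := ⟨lt_trans hz.1 hw.1, hw.2⟩
    have h := hf x z w hx hz hwmem hxz hw.1
    rw [slope_flip f Ψ w z]
    exact h
  constructor
  · intro hpos x hx z hz hxz
    rcases eq_or_lt_of_le hxz with rfl | hxz
    · exact le_refl _
    have h1 := hSle x hx z hz hxz
    have h2 := hpos x hx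
    have hd : 0 < Ψ x - Ψ z := sub_pos.mpr (hΨanti hx hz hxz)
    have h3 : 0 ≤ (f x - f z) / (Ψ x - Ψ z) := le_trans h2 h1
    rw [le_div_iff₀ hd] at h3
    linarith
  · intro hneg x hx z hz hxz
    rcases eq_or_lt_of_le hxz with rfl | hxz
    · exact le_refl _
    have h1 := hSge x hx z hz hxz
    have h2 := hneg z hz
    have hd : 0 < Ψ x - Ψ z := sub_pos.mpr (hΨanti hx hz hxz)
    have h3 : (f x - f z) / (Ψ x - Ψ z) ≤ 0 := le_trans h1 h2
    rw [div_le_iff₀ hd] at h3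
    linarith
end

section
/- Let Ψ be strictly decreasing and nonnegative on I = (a,b) with lim_{x→a⁺} Ψ(x) = ∞, and let f ≥ 0 be Ψ-concave on I. Then lim_{x→a⁺} D⁺_Ψ f(x) ≥ 0. -/
open Set Filter Topology

/-- Since `D⁺_Ψ f` is increasing on `I = (a,b)`, its limit as `x → a⁺` equals its
infimum over `I`; hence `lim_{x→a⁺} D⁺_Ψ f(x) ≥ 0` is expressed as `0 ≤ Dp x` for all `x ∈ I`. -/
theorem stmt_6 (a b : ℝ) (Ψ f Dp : ℝ → ℝ)
    (hab : a < b)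
    (hΨanti : StrictAntiOn Ψ (Set.Ioo a b))
    (hΨpos : ∀ x ∈ Set.Ioo a b, 0 ≤ Ψ x)
    (hΨtop : Tendsto Ψ (𝓝[Set.Ioo a b] a) atTop)
    (hfpos : ∀ x ∈ Set.Ioo a b, 0 ≤ f x)
    (hf : PsiConcaveOn Ψ f a b)
    (hDp : ∀ y ∈ Set.Ioo a b,
      Tendsto (fun x => (f x - f y) / (Ψ x - Ψ y)) (𝓝[Set.Ioo y b] y) (𝓝 (Dp y)))
    (hDpMono : MonotoneOn Dp (Set.Ioo a b)) :
    ∀ x ∈ Set.Ioo a b, 0 ≤ Dp x := by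
  intro y hy
  obtain ⟨hay, hyb⟩ := hy
  -- It suffices to show 0 ≤ Dp y + ε for all ε > 0
  refine le_of_forall_pos_le_add ?_
  intro ε hε
  -- choose x close to a with Ψ x large
  have hmemIio : Set.Iio y ∈ 𝓝[Set.Ioo a b] a :=
    nhdsWithin_le_nhds (Iio_mem_nhds hay)
  have hlarge : ∀ᶠ x in 𝓝[Set.Ioo a b] a, Ψ y + f y / ε + 1 ≤ Ψ x :=
    hΨtop.eventually_ge_atTop _
  have hne : (𝓝[Set.Ioo a b] a).NeBot := by
    rw [nhdsWithin_Ioo_eq_nhdsGT hab]; infer_instance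
  obtain ⟨x, ⟨hxΨ, hxy⟩, hx⟩ :=
    ((hlarge.and hmemIio).and self_mem_nhdsWithin).exists
  -- slope from x to y
  have hfy : 0 ≤ f y := hfpos y ⟨hay, hyb⟩
  have hden : f y / ε + 1 ≤ Ψ x - Ψ y := by linarith
  have hdenpos : 0 < Ψ x - Ψ y := by
    have : 0 ≤ f y / ε := div_nonneg hfy hε.le
    linarith
  have hfx : 0 ≤ f x := hfpos x hx
  have h1 : f y ≤ ε * (Ψ x - Ψ y) := by
    have h2 : ε * (f y / ε + 1) = f y + ε := by field_simp
    nlinarith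
  have hslope : -ε ≤ (f x - f y) / (Ψ x - Ψ y) := by
    rw [le_div_iff₀ hdenpos]
    nlinarith
  -- Dp y is a limit of slopes from y to z, each ≥ slope from x to y
  have hne2 : (𝓝[Set.Ioo y b] y).NeBot := by
    rw [nhdsWithin_Ioo_eq_nhdsGT hyb]; infer_instance
  have hDle : -ε ≤ Dp y := by
    refine ge_of_tendsto (hDp y ⟨hay, hyb⟩) ?_
    filter_upwards [self_mem_nhdsWithin] with z hz
    have hz' : z ∈ Set.Ioo a b := ⟨hay.trans hz.1, hz.2⟩
    have hcon := hf x y z hx ⟨hay, hyb⟩ hz' hxy hz.1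
    have heq : (f y - f z) / (Ψ y - Ψ z) = (f z - f y) / (Ψ z - Ψ y) := by
      rw [← neg_div_neg_eq]; ring_nf
    linarith [hslope.trans (hcon.trans_eq heq)]
  linarith
end

section
/- Let Ψ be strictly decreasing and nonnegative on I = (a,b) with lim_{x→a⁺} Ψ(x) = ∞. Then every nonnegative Ψ-concave function f on I is decreasing on I. -/
open Set Filter Topology

theorem stmt_7 (a b : ℝ) (Ψ f : ℝ → ℝ)
    (hΨanti : StrictAntiOn Ψ (Set.Ioo a b))
    (hΨpos : ∀ x ∈ Set.Ioo a b, 0 ≤ Ψ x)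
    (hΨtop : Tendsto Ψ (𝓝[Set.Ioo a b] a) atTop)
    (hfpos : ∀ x ∈ Set.Ioo a b, 0 ≤ f x)
    (hf : PsiConcaveOn Ψ f a b) :
    AntitoneOn f (Set.Ioo a b) := by
  intro y hy z hz hyz
  rcases eq_or_lt_of_le hyz with rfl | hlt
  · exact le_refl _
  by_contra hcon
  push_neg at hcon
  set s := (f y - f z) / (Ψ y - Ψ z) with hs_def
  have hΨyz : Ψ z < Ψ y := hΨanti hy hz hlt
  have hs : s < 0 := div_neg_of_neg_of_pos (by linarith) (by linarith)
  have hab : a < b := hy.1.trans hy.2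
  have hne : (𝓝[Set.Ioo a b] a).NeBot := by
    rw [← mem_closure_iff_nhdsWithin_neBot, closure_Ioo hab.ne]
    exact left_mem_Icc.mpr hab.le
  have hev1 : ∀ᶠ x in 𝓝[Set.Ioo a b] a, Ψ y + (f y / (-s) + 1) ≤ Ψ x :=
    hΨtop.eventually_ge_atTop _
  have hev2 : ∀ᶠ x in 𝓝[Set.Ioo a b] a, x < y :=
    eventually_nhdsWithin_of_eventually_nhds (eventually_lt_nhds hy.1)
  have hev3 : ∀ᶠ x in 𝓝[Set.Ioo a b] a, x ∈ Set.Ioo a b := eventually_mem_nhdsWithin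
  obtain ⟨x, ⟨hΨx, hxy⟩, hx⟩ := ((hev1.and hev2).and hev3).exists
  have hΨxy : Ψ y < Ψ x := hΨanti hx hy hxy
  have hkey := hf x y z hx hy hz hxy hlt
  rw [div_le_iff₀ (by linarith)] at hkey
  have hfy : 0 ≤ f y := hfpos y hy
  have hfx : 0 ≤ f x := hfpos x hx
  have h1 : f y / (-s) ≤ Ψ x - Ψ y - 1 := by linarith
  have h2 : f y ≤ (Ψ x - Ψ y - 1) * (-s) := (div_le_iff₀ (by linarith)).mp h1
  nlinarith
end

section
/- Let Ψ be strictly decreasing and nonnegative on I = (a,b) and f be Ψ-concave on I. Then f is strictly Ψ-concave on I (i.e., the defining inequality (f(x)-f(y))/(Ψ(x)-Ψ(y)) < (f(y)-f(z))/(Ψ(y)-Ψ(z)) holds strictly for all x < y < z) if and only if there is no open subinterval (c,d) ⊂ I on which f is Ψ-affine, i.e., of the form f(x) = AΨ(x) + B. -/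
open Set Filter Topology

theorem stmt_9 (a b : ℝ) (Ψ f : ℝ → ℝ)
    (hΨanti : StrictAntiOn Ψ (Set.Ioo a b))
    (hΨpos : ∀ x ∈ Set.Ioo a b, 0 ≤ Ψ x)
    (hf : PsiConcaveOn Ψ f a b) :
    (∀ x y z : ℝ, x ∈ Set.Ioo a b → y ∈ Set.Ioo a b → z ∈ Set.Ioo a b →
        x < y → y < z →
        (f x - f y) / (Ψ x - Ψ y) < (f y - f z) / (Ψ y - Ψ z)) ↔
      ¬ ∃ c d A B : ℝ, a ≤ c ∧ c < d ∧ d ≤ b ∧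
        ∀ x ∈ Set.Ioo c d, f x = A * Ψ x + B := by
  have hd : ∀ p q : ℝ, p ∈ Set.Ioo a b → q ∈ Set.Ioo a b → p < q → 0 < Ψ p - Ψ q := by
    intro p q hp hq hpq
    have := hΨanti hp hq hpq
    linarith
  constructor
  · rintro hstrict ⟨c, d, A, B, hac, hcd, hdb, haff⟩
    set x := (3*c + d)/4 with hxdef
    set y := (c + d)/2 with hydef
    set z := (c + 3*d)/4 with hzdef
    have hxcd : x ∈ Set.Ioo c d := by constructor <;> [skip; skip] <;> simp only [hxdef] <;> linarith
    have hycd : y ∈ Set.Ioo c d := by constructor <;> simp only [hydef] <;> linarith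
    have hzcd : z ∈ Set.Ioo c d := by constructor <;> simp only [hzdef] <;> linarith
    have hsub : Set.Ioo c d ⊆ Set.Ioo a b := Set.Ioo_subset_Ioo hac hdb
    have hx := hsub hxcd; have hy := hsub hycd; have hz := hsub hzcd
    have hxy : x < y := by simp only [hxdef, hydef]; linarith
    have hyz : y < z := by simp only [hydef, hzdef]; linarith
    have h1 := hd x y hx hy hxy
    have h2 := hd y z hy hz hyz
    have := hstrict x y z hx hy hz hxy hyz
    rw [haff x hxcd, haff y hycd, haff z hzcd] at this
    have e1 : (A * Ψ x + B - (A * Ψ y + B)) / (Ψ x - Ψ y) = A := by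
      field_simp; ring
    have e2 : (A * Ψ y + B - (A * Ψ z + B)) / (Ψ y - Ψ z) = A := by
      field_simp; ring
    rw [e1, e2] at this
    exact lt_irrefl A this
  · intro hno x y z hx hy hz hxy hyz
    by_contra hcon
    push_neg at hcon
    have hle := hf x y z hx hy hz hxy hyz
    have heq : (f x - f y) / (Ψ x - Ψ y) = (f y - f z) / (Ψ y - Ψ z) :=
      le_antisymm hle hcon
    set s := (f y - f z) / (Ψ y - Ψ z) with hs
    apply hno
    refine ⟨x, z, s, f y - s * Ψ y, hx.1.le, hxy.trans hyz, hz.2.le, ?_⟩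
    intro w hw
    have hwab : w ∈ Set.Ioo a b := ⟨lt_trans hx.1 hw.1, lt_trans hw.2 hz.2⟩
    have dyz := hd y z hy hz hyz
    have dxy := hd x y hx hy hxy
    have hsyz : f y - f z = s * (Ψ y - Ψ z) := by
      rw [hs]; field_simp [ne_of_gt dyz]
    have hsxy : f x - f y = s * (Ψ x - Ψ y) := by
      rw [← heq]; field_simp [ne_of_gt dxy]
    rcases lt_trichotomy w y with hwy | hwy | hwy
    · -- x < w < y
      have h1 := hf x w y hx hwab hy hw.1 hwy
      have h2 := hf w y z hwab hy hz hwy hyz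
      rw [← hs] at h2
      have dxw := hd x w hx hwab hw.1
      have dwy := hd w y hwab hy hwy
      have exw : f x - f w = (f x - f w) / (Ψ x - Ψ w) * (Ψ x - Ψ w) := by
        field_simp [ne_of_gt dxw]
      have ewy : f w - f y = (f w - f y) / (Ψ w - Ψ y) * (Ψ w - Ψ y) := by
        field_simp [ne_of_gt dwy]
      -- s*(dxw+dwy) = Sxw*dxw + Swy*dwy ≤ Swy*(dxw+dwy), so s ≤ Swy; with Swy ≤ s get eq
      have hges : s ≤ (f w - f y) / (Ψ w - Ψ y) := by
        nlinarith [mul_le_mul_of_nonneg_right h1 (le_of_lt dxw)]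
      have hSwy : (f w - f y) / (Ψ w - Ψ y) = s := le_antisymm h2 hges
      have : f w - f y = s * (Ψ w - Ψ y) := by rw [← hSwy]; field_simp [ne_of_gt dwy]
      linarith [this]
    · rw [hwy]; ring
    · -- y < w < z
      have h1 := hf x y w hx hy hwab hxy hwy
      have h2 := hf y w z hy hwab hz hwy hw.2
      have dyw := hd y w hy hwab hwy
      have dwz := hd w z hwab hz hw.2
      have hlexy : s ≤ (f y - f w) / (Ψ y - Ψ w) := by
        have : (f x - f y) / (Ψ x - Ψ y) = s := by rw [heq, hs]
        linarith [h1, this]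
      have eyw : f y - f w = (f y - f w) / (Ψ y - Ψ w) * (Ψ y - Ψ w) := by
        field_simp [ne_of_gt dyw]
      have ewz : f w - f z = (f w - f z) / (Ψ w - Ψ z) * (Ψ w - Ψ z) := by
        field_simp [ne_of_gt dwz]
      -- s*(dyw+dwz) = Syw*dyw + Swz*dwz ≥ Syw*(dyw+dwz), so Syw ≤ s
      have hles : (f y - f w) / (Ψ y - Ψ w) ≤ s := by
        nlinarith [mul_le_mul_of_nonneg_right h2 (le_of_lt dwz)]
      have hSyw : (f y - f w) / (Ψ y - Ψ w) = s := le_antisymm hles hlexy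
      have : f y - f w = s * (Ψ y - Ψ w) := by rw [← hSyw]; field_simp [ne_of_gt dyw]
      linarith [this]
end

section
/- Let C ⊂ ℝ be measurable, and suppose x < z with m(C ∩ (x,z)) > 0, where every point of C is a point of Lebesgue density of C. Then there exists y ∈ C ∩ (x,z) such that m(C ∩ (x,y)) > 0 and m(C ∩ (y,z)) > 0. -/
open Set Filter Topology MeasureTheory

private lemma density_left (C : Set ℝ) (y a : ℝ) (ha : a < y)
    (hd : Tendsto (fun p : ℝ × ℝ =>
          volume (C ∩ Set.Ioo p.1 p.2) / volume (Set.Ioo p.1 p.2))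
        (𝓝[{p : ℝ × ℝ | p.1 < y ∧ y < p.2}] (y, y)) (𝓝 1)) :
    0 < volume (C ∩ Set.Ioo a y) := by
  by_contra h0
  push_neg at h0
  have h0 : volume (C ∩ Set.Ioo a y) = 0 := le_antisymm h0 (zero_le)
  -- map ε ↦ (y - ε, y + ε²)
  have hφ : Tendsto (fun ε : ℝ => ((y - ε, y + ε ^ 2) : ℝ × ℝ)) (𝓝[>] (0:ℝ))
      (𝓝[{p : ℝ × ℝ | p.1 < y ∧ y < p.2}] (y, y)) := by
    rw [tendsto_nhdsWithin_iff]
    constructor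
    · have : Continuous (fun ε : ℝ => ((y - ε, y + ε ^ 2) : ℝ × ℝ)) := by continuity
      have := this.tendsto 0
      simp at this
      exact this.mono_left nhdsWithin_le_nhds
    · filter_upwards [self_mem_nhdsWithin] with ε (hε : 0 < ε)
      constructor
      · simpa using hε
      · nlinarith
  have hT := hd.comp hφ
  have h1 : ∀ᶠ ε in 𝓝[>] (0:ℝ),
      ENNReal.ofReal (1/2) <
        volume (C ∩ Set.Ioo (y - ε) (y + ε ^ 2)) / volume (Set.Ioo (y - ε) (y + ε ^ 2)) := by
    have : ENNReal.ofReal (1/2) < 1 := by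
      rw [ENNReal.ofReal_lt_one]; norm_num
    exact hT.eventually_const_lt this
  have h2 : ∀ᶠ ε in 𝓝[>] (0:ℝ),
      volume (C ∩ Set.Ioo (y - ε) (y + ε ^ 2)) / volume (Set.Ioo (y - ε) (y + ε ^ 2))
        ≤ ENNReal.ofReal ε := by
    have hmem : Set.Ioo (0:ℝ) (y - a) ∈ 𝓝[>] (0:ℝ) :=
      Ioo_mem_nhdsGT_of_mem ⟨le_refl _, by linarith⟩
    filter_upwards [hmem] with ε hε
    obtain ⟨hε0, hεa⟩ := hε
    have hnum : volume (C ∩ Set.Ioo (y - ε) (y + ε ^ 2)) ≤ ENNReal.ofReal (ε ^ 2) := by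
      have hsub : C ∩ Set.Ioo (y - ε) (y + ε ^ 2) ⊆
          (C ∩ Set.Ioo a y) ∪ Set.Ico y (y + ε ^ 2) := by
        rintro t ⟨htC, ht1, ht2⟩
        rcases lt_or_ge t y with h | h
        · exact Or.inl ⟨htC, by linarith, h⟩
        · exact Or.inr ⟨h, ht2⟩
      calc volume (C ∩ Set.Ioo (y - ε) (y + ε ^ 2))
          ≤ volume ((C ∩ Set.Ioo a y) ∪ Set.Ico y (y + ε ^ 2)) := measure_mono hsub
        _ ≤ volume (C ∩ Set.Ioo a y) + volume (Set.Ico y (y + ε ^ 2)) := measure_union_le _ _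
        _ = ENNReal.ofReal (ε ^ 2) := by
            rw [h0, zero_add, Real.volume_Ico]
            ring_nf
    have hden : ENNReal.ofReal ε ≤ volume (Set.Ioo (y - ε) (y + ε ^ 2)) := by
      rw [Real.volume_Ioo]
      apply ENNReal.ofReal_le_ofReal
      nlinarith
    calc volume (C ∩ Set.Ioo (y - ε) (y + ε ^ 2)) / volume (Set.Ioo (y - ε) (y + ε ^ 2))
        ≤ ENNReal.ofReal (ε ^ 2) / ENNReal.ofReal ε := ENNReal.div_le_div hnum hden
      _ = ENNReal.ofReal (ε ^ 2 / ε) := (ENNReal.ofReal_div_of_pos hε0).symm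
      _ = ENNReal.ofReal ε := by rw [sq, mul_div_assoc, div_self hε0.ne', mul_one]
  have h3 : ∀ᶠ ε in 𝓝[>] (0:ℝ), ENNReal.ofReal ε < ENNReal.ofReal (1/2) := by
    have hmem : Set.Ioo (0:ℝ) (1/2) ∈ 𝓝[>] (0:ℝ) :=
      Ioo_mem_nhdsGT_of_mem ⟨le_refl _, by norm_num⟩
    filter_upwards [hmem] with ε hε
    exact ENNReal.ofReal_lt_ofReal_iff (by norm_num) |>.mpr hε.2
  obtain ⟨ε, hε1, hε2, hε3⟩ := (h1.and (h2.and h3)).exists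
  exact lt_asymm (hε1.trans_le hε2) hε3

private lemma density_right (C : Set ℝ) (y b : ℝ) (hb : y < b)
    (hd : Tendsto (fun p : ℝ × ℝ =>
          volume (C ∩ Set.Ioo p.1 p.2) / volume (Set.Ioo p.1 p.2))
        (𝓝[{p : ℝ × ℝ | p.1 < y ∧ y < p.2}] (y, y)) (𝓝 1)) :
    0 < volume (C ∩ Set.Ioo y b) := by
  by_contra h0
  push_neg at h0
  have h0 : volume (C ∩ Set.Ioo y b) = 0 := le_antisymm h0 (zero_le)
  have hφ : Tendsto (fun ε : ℝ => ((y - ε ^ 2, y + ε) : ℝ × ℝ)) (𝓝[>] (0:ℝ))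
      (𝓝[{p : ℝ × ℝ | p.1 < y ∧ y < p.2}] (y, y)) := by
    rw [tendsto_nhdsWithin_iff]
    constructor
    · have : Continuous (fun ε : ℝ => ((y - ε ^ 2, y + ε) : ℝ × ℝ)) := by continuity
      have := this.tendsto 0
      simp at this
      exact this.mono_left nhdsWithin_le_nhds
    · filter_upwards [self_mem_nhdsWithin] with ε (hε : 0 < ε)
      constructor
      · nlinarith
      · linarith
  have hT := hd.comp hφ
  have h1 : ∀ᶠ ε in 𝓝[>] (0:ℝ),
      ENNReal.ofReal (1/2) <
        volume (C ∩ Set.Ioo (y - ε ^ 2) (y + ε)) / volume (Set.Ioo (y - ε ^ 2) (y + ε)) := by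
    have : ENNReal.ofReal (1/2) < 1 := by
      rw [ENNReal.ofReal_lt_one]; norm_num
    exact hT.eventually_const_lt this
  have h2 : ∀ᶠ ε in 𝓝[>] (0:ℝ),
      volume (C ∩ Set.Ioo (y - ε ^ 2) (y + ε)) / volume (Set.Ioo (y - ε ^ 2) (y + ε))
        ≤ ENNReal.ofReal ε := by
    have hmem : Set.Ioo (0:ℝ) (b - y) ∈ 𝓝[>] (0:ℝ) :=
      Ioo_mem_nhdsGT_of_mem ⟨le_refl _, by linarith⟩
    filter_upwards [hmem] with ε hε
    obtain ⟨hε0, hεb⟩ := hε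
    have hnum : volume (C ∩ Set.Ioo (y - ε ^ 2) (y + ε)) ≤ ENNReal.ofReal (ε ^ 2) := by
      have hsub : C ∩ Set.Ioo (y - ε ^ 2) (y + ε) ⊆
          (C ∩ Set.Ioo y b) ∪ Set.Ioc (y - ε ^ 2) y := by
        rintro t ⟨htC, ht1, ht2⟩
        rcases le_or_gt t y with h | h
        · exact Or.inr ⟨ht1, h⟩
        · exact Or.inl ⟨htC, h, by linarith⟩
      calc volume (C ∩ Set.Ioo (y - ε ^ 2) (y + ε))
          ≤ volume ((C ∩ Set.Ioo y b) ∪ Set.Ioc (y - ε ^ 2) y) := measure_mono hsub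
        _ ≤ volume (C ∩ Set.Ioo y b) + volume (Set.Ioc (y - ε ^ 2) y) := measure_union_le _ _
        _ = ENNReal.ofReal (ε ^ 2) := by
            rw [h0, zero_add, Real.volume_Ioc]
            ring_nf
    have hden : ENNReal.ofReal ε ≤ volume (Set.Ioo (y - ε ^ 2) (y + ε)) := by
      rw [Real.volume_Ioo]
      apply ENNReal.ofReal_le_ofReal
      nlinarith
    calc volume (C ∩ Set.Ioo (y - ε ^ 2) (y + ε)) / volume (Set.Ioo (y - ε ^ 2) (y + ε))
        ≤ ENNReal.ofReal (ε ^ 2) / ENNReal.ofReal ε := ENNReal.div_le_div hnum hden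
      _ = ENNReal.ofReal (ε ^ 2 / ε) := (ENNReal.ofReal_div_of_pos hε0).symm
      _ = ENNReal.ofReal ε := by rw [sq, mul_div_assoc, div_self hε0.ne', mul_one]
  have h3 : ∀ᶠ ε in 𝓝[>] (0:ℝ), ENNReal.ofReal ε < ENNReal.ofReal (1/2) := by
    have hmem : Set.Ioo (0:ℝ) (1/2) ∈ 𝓝[>] (0:ℝ) :=
      Ioo_mem_nhdsGT_of_mem ⟨le_refl _, by norm_num⟩
    filter_upwards [hmem] with ε hε
    exact ENNReal.ofReal_lt_ofReal_iff (by norm_num) |>.mpr hε.2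
  obtain ⟨ε, hε1, hε2, hε3⟩ := (h1.and (h2.and h3)).exists
  exact lt_asymm (hε1.trans_le hε2) hε3

theorem stmt_12 (C : Set ℝ) (hC : MeasurableSet C)
    (hdens : ∀ y ∈ C,
      Tendsto (fun p : ℝ × ℝ =>
          volume (C ∩ Set.Ioo p.1 p.2) / volume (Set.Ioo p.1 p.2))
        (𝓝[{p : ℝ × ℝ | p.1 < y ∧ y < p.2}] (y, y)) (𝓝 1))
    (x z : ℝ) (hxz : x < z)
    (hpos : 0 < volume (C ∩ Set.Ioo x z)) :
    ∃ y ∈ C ∩ Set.Ioo x z,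
      0 < volume (C ∩ Set.Ioo x y) ∧ 0 < volume (C ∩ Set.Ioo y z) := by
  obtain ⟨y, hy⟩ := nonempty_of_measure_ne_zero hpos.ne'
  refine ⟨y, hy, ?_, ?_⟩
  · exact density_left C y x hy.2.1 (hdens y hy.1)
  · exact density_right C y z hy.2.2 (hdens y hy.1)
end

section
/- Let 1 ≤ p < ∞ and w > 0 a.e. on I = (0,l). The space C_{p,w}(I) is nontrivial (contains a nonzero function) if and only if ∫_c^l w(x)^p dx < ∞ for some c ∈ I. -/
open Set Filter Topology MeasureTheory ENNReal

def CesI (l : EReal) : Set ℝ := {x : ℝ | 0 < x ∧ (x : EReal) < l}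

noncomputable def cesNorm (l : EReal) (p : ℝ) (w f : ℝ → ℝ) : ℝ≥0∞ :=
  (∫⁻ x in CesI l,
      (ENNReal.ofReal (w x) * ∫⁻ t in Set.Ioo 0 x, ENNReal.ofReal |f t|) ^ p) ^ (1 / p)

lemma measJ (l : EReal) (c : ℝ) : MeasurableSet {x : ℝ | c < x ∧ (x : EReal) < l} :=
  measurableSet_Ioi.inter (measurable_coe_real_ereal measurableSet_Iio)

lemma exists_pos_partial (l : EReal) (f : ℝ → ℝ) (hf : Measurable f)
    (hne : ¬ (∀ᵐ x ∂(volume.restrict (CesI l)), f x = 0)) :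
    ∃ c ∈ CesI l, 0 < ∫⁻ t in Set.Ioo 0 c, ENNReal.ofReal |f t| := by
  by_contra hcon
  push_neg at hcon
  apply hne
  rw [ae_restrict_iff' (show MeasurableSet (CesI l) from measJ l 0)]
  have hnull : ∀ q : ℚ, volume {t : ℝ | t ∈ Ioo 0 (q:ℝ) ∧ (q:ℝ) ∈ CesI l ∧ f t ≠ 0} = 0 := by
    intro q
    by_cases hq : (q:ℝ) ∈ CesI l
    · have h0 : ∫⁻ t in Set.Ioo 0 (q:ℝ), ENNReal.ofReal |f t| = 0 :=
        le_antisymm (hcon _ hq) (zero_le ..)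
      rw [lintegral_eq_zero_iff hf.abs.ennreal_ofReal] at h0
      have h1 := (ae_restrict_iff' measurableSet_Ioo).mp h0
      rw [ae_iff] at h1
      refine measure_mono_null (fun t ht => ?_) h1
      simp only [mem_setOf_eq, Classical.not_imp, Pi.zero_apply, ENNReal.ofReal_eq_zero,
        not_le, abs_pos]
      exact ⟨ht.1, ht.2.2⟩
    · refine measure_mono_null (fun t ht => absurd ht.2.1 hq) measure_empty
  have hU : volume {x : ℝ | x ∈ CesI l ∧ f x ≠ 0} = 0 := by
    refine measure_mono_null (fun t ht => ?_) (measure_iUnion_null_iff.mpr hnull)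
    obtain ⟨y, hy1, hy2⟩ := EReal.exists_between_coe_real ht.1.2
    obtain ⟨q, hq1, hq2⟩ := exists_rat_btwn (EReal.coe_lt_coe_iff.mp hy1)
    refine mem_iUnion.mpr ⟨q, ⟨ht.1.1, hq1⟩, ⟨lt_trans ht.1.1 hq1, ?_⟩, ht.2⟩
    exact lt_trans (EReal.coe_lt_coe_iff.mpr hq2) hy2
  rw [ae_iff]
  convert hU using 2
  ext x
  simp [CesI]; tauto

/-- `C_{p,w}(I) ≠ {0}` iff `∫_c^l w^p < ∞` for some `c ∈ I`. -/
theorem stmt_14 (l : EReal) (hl : 0 < l) (p : ℝ) (hp : 1 ≤ p) (w : ℝ → ℝ)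
    (hw : Measurable w) (hwpos : ∀ᵐ x ∂(volume.restrict (CesI l)), 0 < w x) :
    (∃ f : ℝ → ℝ, Measurable f ∧ cesNorm l p w f < ⊤ ∧
        ¬ (∀ᵐ x ∂(volume.restrict (CesI l)), f x = 0)) ↔
      ∃ c ∈ CesI l,
        (∫⁻ x in {x : ℝ | c < x ∧ (x : EReal) < l}, ENNReal.ofReal (w x) ^ p) < ⊤ := by
  have hp0 : (0:ℝ) < p := lt_of_lt_of_le one_pos hp
  constructor
  · rintro ⟨f, hf, hnorm, hne⟩
    set F : ℝ → ℝ≥0∞ := fun x => ∫⁻ t in Set.Ioo 0 x, ENNReal.ofReal |f t| with hF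
    have hFmono : Monotone F := fun a b hab => lintegral_mono_set (Ioo_subset_Ioo le_rfl hab)
    obtain ⟨c, hc, hcpos⟩ := exists_pos_partial l f hf hne
    refine ⟨c, hc, ?_⟩
    have hA : ∫⁻ x in CesI l, (ENNReal.ofReal (w x) * F x) ^ p < ⊤ := by
      have := hnorm
      rw [cesNorm, ENNReal.rpow_lt_top_iff_of_pos (by positivity)] at this
      exact this
    set J : Set ℝ := {x : ℝ | c < x ∧ (x : EReal) < l} with hJ
    have hJsub : J ⊆ CesI l := fun x hx => ⟨lt_trans hc.1 hx.1, hx.2⟩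
    have key : ∫⁻ x in J, ENNReal.ofReal (w x) ^ p * F c ^ p ≤
        ∫⁻ x in CesI l, (ENNReal.ofReal (w x) * F x) ^ p := by
      refine le_trans (setLIntegral_mono
        (((hw.ennreal_ofReal.mul hFmono.measurable).pow_const p)) (fun x hx => ?_))
        (lintegral_mono_set hJsub)
      rw [← ENNReal.mul_rpow_of_nonneg _ _ (le_of_lt hp0)]
      exact ENNReal.rpow_le_rpow (mul_le_mul_right (hFmono (le_of_lt hx.1)) _) (le_of_lt hp0)
    rw [lintegral_mul_const _ (hw.ennreal_ofReal.pow_const p)] at key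
    have hεp : F c ^ p ≠ 0 := by
      simp only [ne_eq, ENNReal.rpow_eq_zero_iff, not_or, not_and, not_lt]
      exact ⟨fun h => absurd h (ne_of_gt hcpos), fun _ => le_of_lt hp0⟩
    by_contra htop
    push_neg at htop
    rw [top_le_iff.mp htop, ENNReal.top_mul hεp] at key
    exact absurd (lt_of_le_of_lt key hA) (lt_irrefl ⊤)
  · rintro ⟨c, hc, hC⟩
    obtain ⟨c', hc1, hc2⟩ := EReal.exists_between_coe_real hc.2
    rw [EReal.coe_lt_coe_iff] at hc1
    set f : ℝ → ℝ := (Ioo c c').indicator (fun _ => (1:ℝ)) with hf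
    have hfm : Measurable f := measurable_const.indicator measurableSet_Ioo
    have hIoosub : Ioo c c' ⊆ CesI l := fun x hx =>
      ⟨lt_trans hc.1 hx.1, lt_trans (EReal.coe_lt_coe_iff.mpr hx.2) hc2⟩
    refine ⟨f, hfm, ?_, ?_⟩
    · -- norm finite
      set F : ℝ → ℝ≥0∞ := fun x => ∫⁻ t in Set.Ioo 0 x, ENNReal.ofReal |f t| with hF
      have hFeq : ∀ x, F x = volume (Ioo c c' ∩ Ioo 0 x) := by
        intro x
        have : (fun t => ENNReal.ofReal |f t|) = (Ioo c c').indicator (fun _ => (1:ℝ≥0∞)) := by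
          ext t
          by_cases ht : t ∈ Ioo c c' <;> simp [hf, ht]
        have h2 : F x = ∫⁻ t in Ioo 0 x, (Ioo c c').indicator (fun _ => (1:ℝ≥0∞)) t := by
          rw [hF]; exact lintegral_congr fun t => congrFun this t
        rw [h2, lintegral_indicator measurableSet_Ioo,
          Measure.restrict_restrict measurableSet_Ioo]
        simp
      have hFbound : ∀ x, F x ≤ ENNReal.ofReal (c' - c) := by
        intro x
        rw [hFeq]
        refine le_trans (measure_mono inter_subset_left) ?_
        rw [Real.volume_Ioo]
      have hFzero : ∀ x ≤ c, F x = 0 := by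
        intro x hx
        rw [hFeq]
        refine measure_mono_null (fun t ht => ?_) measure_empty
        exact absurd (lt_of_lt_of_le ht.2.2 hx) (not_lt.mpr (le_of_lt ht.1.1))
      set J : Set ℝ := {x : ℝ | c < x ∧ (x : EReal) < l} with hJ
      have hsplit : CesI l = (CesI l ∩ Iic c) ∪ J := by
        ext x
        simp only [CesI, hJ, mem_union, mem_inter_iff, mem_setOf_eq, mem_Iic]
        constructor
        · rintro ⟨h1, h2⟩
          rcases le_or_gt x c with h | h
          · exact Or.inl ⟨⟨h1, h2⟩, h⟩
          · exact Or.inr ⟨h, h2⟩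
        · rintro (⟨⟨h1, h2⟩, _⟩ | ⟨h1, h2⟩)
          · exact ⟨h1, h2⟩
          · exact ⟨lt_trans hc.1 h1, h2⟩
      have hA : ∫⁻ x in CesI l, (ENNReal.ofReal (w x) * F x) ^ p < ⊤ := by
        rw [hsplit, lintegral_union (measJ l c)
          (Set.disjoint_left.mpr fun x hx1 hx2 => absurd hx2.1 (not_lt.mpr hx1.2))]
        have hmeas : MeasurableSet (CesI l ∩ Iic c) := (measJ l 0).inter measurableSet_Iic
        have h1 : ∫⁻ x in CesI l ∩ Iic c, (ENNReal.ofReal (w x) * F x) ^ p = 0 :=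
          calc ∫⁻ x in CesI l ∩ Iic c, (ENNReal.ofReal (w x) * F x) ^ p
              = ∫⁻ _x in CesI l ∩ Iic c, 0 := setLIntegral_congr_fun hmeas
                (fun x hx => by
                  rw [hFzero x hx.2, mul_zero, ENNReal.zero_rpow_of_pos hp0])
            _ = 0 := lintegral_zero
        rw [h1, zero_add]
        have h2 : ∫⁻ x in J, (ENNReal.ofReal (w x) * F x) ^ p ≤
            ∫⁻ x in J, ENNReal.ofReal (w x) ^ p * ENNReal.ofReal (c' - c) ^ p := by
          refine setLIntegral_mono ((hw.ennreal_ofReal.pow_const p).mul_const _)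
            (fun x _ => ?_)
          rw [← ENNReal.mul_rpow_of_nonneg _ _ (le_of_lt hp0)]
          exact ENNReal.rpow_le_rpow (mul_le_mul_right (hFbound x) _) (le_of_lt hp0)
        refine lt_of_le_of_lt h2 ?_
        rw [lintegral_mul_const _ (hw.ennreal_ofReal.pow_const p)]
        exact ENNReal.mul_lt_top hC (ENNReal.rpow_lt_top_of_nonneg (le_of_lt hp0)
          ENNReal.ofReal_ne_top)
      rw [cesNorm]
      exact ENNReal.rpow_lt_top_of_nonneg (by positivity) (ne_of_lt hA)
    · -- nontrivial
      intro hae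
      rw [ae_restrict_iff' (show MeasurableSet (CesI l) from measJ l 0), ae_iff] at hae
      have hsub : Ioo c c' ⊆ {x : ℝ | ¬ (x ∈ CesI l → f x = 0)} := by
        intro x hx
        simp only [mem_setOf_eq, Classical.not_imp]
        refine ⟨hIoosub hx, ?_⟩
        simp [hf, hx]
      have := measure_mono_null hsub hae
      rw [Real.volume_Ioo] at this
      simp only [ENNReal.ofReal_eq_zero, sub_nonpos] at this
      exact absurd hc1 (not_lt.mpr this)
end

section
/- Let 1 ≤ p < ∞ and w > 0 a.e. on I = (0,l) with C_{p,w}(I) ≠ {0}. Then C_{p,w}(I) is not continuously embedded into L₁(I): there exists a sequence (gₙ) with ‖gₙ‖_{C_{p,w}} ≤ 1 and ‖gₙ‖_{L₁} → ∞. -/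
open Set Filter Topology MeasureTheory ENNReal

/-- A strictly increasing real sequence starting at `c` and converging to `l` from below. -/
private lemma exists_seq_to (l : EReal) (c : ℝ) (hc : (c : EReal) < l) :
    ∃ u : ℕ → ℝ, StrictMono u ∧ u 0 = c ∧ (∀ k, (u k : EReal) < l) ∧
      ∀ x : ℝ, (x : EReal) < l → ∃ k, x ≤ u k := by
  rcases eq_or_ne l ⊤ with rfl | hne
  · refine ⟨fun k => c + k, ?_, by simp, fun k => EReal.coe_lt_top _, fun x _ => ?_⟩
    · intro a b hab
      have : (a : ℝ) < b := by exact_mod_cast hab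
      simpa using this
    · refine ⟨⌈x - c⌉₊, ?_⟩
      have := Nat.le_ceil (x - c)
      show x ≤ c + (⌈x - c⌉₊ : ℝ)
      linarith
  · have hbot : l ≠ ⊥ := by
      intro h
      rw [h] at hc
      exact (not_lt_bot hc).elim
    set L := l.toReal with hLdef
    have hL : (L : EReal) = l := EReal.coe_toReal hne hbot
    have hcL : c < L := by
      rw [← hL] at hc
      exact_mod_cast hc
    have hpos : 0 < L - c := by linarith
    refine ⟨fun k => L - (L - c) / (k + 1), ?_, ?_, ?_, ?_⟩
    · intro a b hab
      have h1 : (0 : ℝ) < (a : ℝ) + 1 := by positivity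
      have h2 : ((a : ℝ) + 1) < (b : ℝ) + 1 := by
        have : (a : ℝ) < b := by exact_mod_cast hab
        linarith
      have := div_lt_div_of_pos_left hpos h1 h2
      simp only []
      linarith
    · simp
    · intro k
      have h1 : (0 : ℝ) < (L - c) / (k + 1) := by positivity
      have : L - (L - c) / (k + 1) < L := by linarith
      rw [← hL]
      exact_mod_cast this
    · intro x hx
      rw [← hL] at hx
      have hxL : x < L := by exact_mod_cast hx
      have hLx : 0 < L - x := by linarith
      obtain ⟨k, hk⟩ := exists_nat_ge ((L - c) / (L - x))
      refine ⟨k, ?_⟩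
      have hk1 : (L - c) / (L - x) ≤ (k : ℝ) + 1 := by linarith
      have h2 : L - c ≤ ((k : ℝ) + 1) * (L - x) := by
        rw [div_le_iff₀ hLx] at hk1
        linarith
      have h3 : (L - c) / ((k : ℝ) + 1) ≤ L - x := by
        rw [div_le_iff₀ (by positivity : (0:ℝ) < (k : ℝ) + 1)]
        linarith [mul_comm ((k : ℝ) + 1) (L - x)]
      linarith

/-- A nontrivial `C_{p,w}(I)` is not continuously embedded into `L₁(I)`. -/
theorem stmt_15 (l : EReal) (hl : 0 < l) (p : ℝ) (hp : 1 ≤ p) (w : ℝ → ℝ)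
    (hw : Measurable w) (hwpos : ∀ᵐ x ∂(volume.restrict (CesI l)), 0 < w x)
    (hnontriv : ∃ c ∈ CesI l,
      (∫⁻ x in {x : ℝ | c < x ∧ (x : EReal) < l}, ENNReal.ofReal (w x) ^ p) < ⊤) :
    ∃ g : ℕ → ℝ → ℝ, (∀ n, Measurable (g n)) ∧
      (∀ n, cesNorm l p w (g n) ≤ 1) ∧
      Tendsto (fun n => ∫⁻ t in CesI l, ENNReal.ofReal |g n t|) atTop (𝓝 ⊤) := by
  obtain ⟨c, ⟨hc0, hcl⟩, hfin⟩ := hnontriv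
  have hp0 : 0 < p := lt_of_lt_of_le one_pos hp
  set f : ℝ → ℝ≥0∞ := fun x => ENNReal.ofReal (w x) ^ p with hfdef
  have hfm : Measurable f :=
    ENNReal.continuous_rpow_const.measurable.comp hw.ennreal_ofReal
  set S : ℝ → Set ℝ := fun a => {x : ℝ | a < x ∧ (x : EReal) < l} with hSdef
  have hltm : MeasurableSet {x : ℝ | (x : EReal) < l} :=
    measurable_coe_real_ereal measurableSet_Iio
  have hSm : ∀ a, MeasurableSet (S a) := fun a =>
    (measurableSet_Ioi (a := a)).inter hltm
  set ν : Measure ℝ := volume.withDensity f with hν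
  have hνS : ∀ a, ν (S a) = ∫⁻ x in S a, f x := fun a =>
    withDensity_apply f (hSm a)
  have hνc : ν (S c) ≠ ⊤ := by
    rw [hνS]; exact hfin.ne
  -- a sequence increasing to l
  obtain ⟨u, humono, hu0, hul, hulim⟩ := exists_seq_to l c hcl
  have hant : Antitone fun k => S (u k) := by
    intro k m hkm x hx
    exact ⟨lt_of_le_of_lt (humono.monotone hkm) hx.1, hx.2⟩
  have hiInter : (⋂ k, S (u k)) = ∅ := by
    ext x
    simp only [mem_iInter, mem_empty_iff_false, iff_false]
    intro h
    obtain ⟨k, hk⟩ := hulim x (h 0).2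
    exact absurd (h k).1 (not_lt.2 hk)
  have htend : Tendsto (fun k => ν (S (u k))) atTop (𝓝 0) := by
    have := tendsto_measure_iInter_atTop (μ := ν) (s := fun k => S (u k))
      (fun k => (hSm _).nullMeasurableSet) hant ⟨0, show ν (S (u 0)) ≠ ⊤ by rw [hu0]; exact hνc⟩
    rwa [hiInter, measure_empty] at this
  -- choose for each n an interval (A n, B n) near l with small weighted tail
  have hkey : ∀ n : ℕ, ∃ a b : ℝ, 0 < a ∧ a < b ∧ (b : EReal) < l ∧
      ν (S a) ≤ ((((n : ℝ≥0∞)) + 1) ^ p)⁻¹ := by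
    intro n
    have hne : (((n : ℝ≥0∞)) + 1) ^ p ≠ ⊤ :=
      ENNReal.rpow_ne_top_of_nonneg hp0.le (by simp)
    have hpos : (0 : ℝ≥0∞) < ((((n : ℝ≥0∞)) + 1) ^ p)⁻¹ :=
      ENNReal.inv_pos.mpr hne
    obtain ⟨k, hk⟩ := (htend.eventually_lt_const hpos).exists
    refine ⟨u k, u (k + 1), ?_, humono (Nat.lt_succ_self k), hul _, hk.le⟩
    calc (0 : ℝ) < c := hc0
      _ = u 0 := hu0.symm
      _ ≤ u k := humono.monotone (Nat.zero_le k)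
  choose A B hA hAB hBl hT using hkey
  set g : ℕ → ℝ → ℝ :=
    fun n => (Ioo (A n) (B n)).indicator fun _ => (n : ℝ) / (B n - A n) with hg
  have hgm : ∀ n, Measurable (g n) := fun n =>
    measurable_const.indicator measurableSet_Ioo
  have habs : ∀ n t, ENNReal.ofReal |g n t| =
      (Ioo (A n) (B n)).indicator
        (fun _ => ENNReal.ofReal ((n : ℝ) / (B n - A n))) t := by
    intro n t
    by_cases ht : t ∈ Ioo (A n) (B n)
    · simp [hg, ht, abs_of_nonneg
        (div_nonneg n.cast_nonneg (sub_nonneg.2 (hAB n).le))]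
    · simp [hg, ht]
  have hint : ∀ n (s : Set ℝ), (∫⁻ t in s, ENNReal.ofReal |g n t|) =
      ENNReal.ofReal ((n : ℝ) / (B n - A n)) * volume (Ioo (A n) (B n) ∩ s) := by
    intro n s
    simp_rw [habs]
    rw [lintegral_indicator measurableSet_Ioo, setLIntegral_const,
      Measure.restrict_apply measurableSet_Ioo]
  have hBA : ∀ n, (0 : ℝ) < B n - A n := fun n => sub_pos.2 (hAB n)
  have hfull : ∀ n : ℕ, ENNReal.ofReal ((n : ℝ) / (B n - A n)) *
      volume (Ioo (A n) (B n)) = (n : ℝ≥0∞) := by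
    intro n
    rw [Real.volume_Ioo, ← ENNReal.ofReal_mul
      (div_nonneg n.cast_nonneg (hBA n).le),
      div_mul_cancel₀ _ (hBA n).ne', ENNReal.ofReal_natCast]
  have hL1 : ∀ n, (∫⁻ t in CesI l, ENNReal.ofReal |g n t|) = (n : ℝ≥0∞) := by
    intro n
    rw [hint n (CesI l)]
    have hsub : Ioo (A n) (B n) ⊆ CesI l := by
      intro x hx
      refine ⟨lt_trans (hA n) hx.1, ?_⟩
      exact lt_trans (EReal.coe_lt_coe_iff.2 hx.2) (hBl n)
    rw [inter_eq_left.2 hsub, hfull]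
  refine ⟨g, hgm, ?_, ?_⟩
  · -- cesNorm bound
    intro n
    have hCm : MeasurableSet (CesI l) := (measurableSet_Ioi (a := (0:ℝ))).inter hltm
    have hbound : (∫⁻ x in CesI l,
        (ENNReal.ofReal (w x) * ∫⁻ t in Set.Ioo 0 x, ENNReal.ofReal |g n t|) ^ p)
        ≤ 1 := by
      have step1 : (∫⁻ x in CesI l,
          (ENNReal.ofReal (w x) * ∫⁻ t in Set.Ioo 0 x, ENNReal.ofReal |g n t|) ^ p)
          ≤ ∫⁻ x in CesI l,
            (S (A n)).indicator (fun x => f x * (n : ℝ≥0∞) ^ p) x := by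
        refine setLIntegral_mono' hCm fun x hx => ?_
        by_cases hax : A n < x
        · have hxS : x ∈ S (A n) := ⟨hax, hx.2⟩
          rw [indicator_of_mem hxS]
          have hinner : (∫⁻ t in Set.Ioo 0 x, ENNReal.ofReal |g n t|)
              ≤ (n : ℝ≥0∞) := by
            rw [hint n (Ioo 0 x), ← hfull n]
            exact mul_le_mul_right (measure_mono inter_subset_left) _
          calc (ENNReal.ofReal (w x) * ∫⁻ t in Set.Ioo 0 x, ENNReal.ofReal |g n t|) ^ p
              ≤ (ENNReal.ofReal (w x) * (n : ℝ≥0∞)) ^ p :=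
                ENNReal.rpow_le_rpow (mul_le_mul_right hinner _) hp0.le
            _ = f x * (n : ℝ≥0∞) ^ p := by
                rw [ENNReal.mul_rpow_of_nonneg _ _ hp0.le]
        · have hempty : Ioo (A n) (B n) ∩ Ioo 0 x = ∅ := by
            ext t
            simp only [mem_inter_iff, mem_Ioo, mem_empty_iff_false, iff_false]
            rintro ⟨⟨h1, _⟩, _, h4⟩
            exact hax (lt_trans h1 h4)
          have hinner0 : (∫⁻ t in Set.Ioo 0 x, ENNReal.ofReal |g n t|) = 0 := by
            rw [hint n (Ioo 0 x), hempty, measure_empty, mul_zero]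
          rw [hinner0, mul_zero, ENNReal.zero_rpow_of_pos hp0]
          exact zero_le
      have step2 : (∫⁻ x in CesI l,
          (S (A n)).indicator (fun x => f x * (n : ℝ≥0∞) ^ p) x)
          ≤ ∫⁻ x, (S (A n)).indicator (fun x => f x * (n : ℝ≥0∞) ^ p) x :=
        lintegral_mono' Measure.restrict_le_self le_rfl
      have step3 : (∫⁻ x, (S (A n)).indicator (fun x => f x * (n : ℝ≥0∞) ^ p) x)
          = ν (S (A n)) * (n : ℝ≥0∞) ^ p := by
        rw [lintegral_indicator (hSm _), lintegral_mul_const _ hfm, hνS]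
      have hle1 : ν (S (A n)) * (n : ℝ≥0∞) ^ p ≤ 1 := by
        have h1 : (n : ℝ≥0∞) ^ p ≤ (((n : ℝ≥0∞)) + 1) ^ p :=
          ENNReal.rpow_le_rpow (le_add_of_nonneg_right (zero_le)) hp0.le
        have hne : (((n : ℝ≥0∞)) + 1) ^ p ≠ ⊤ :=
          ENNReal.rpow_ne_top_of_nonneg hp0.le (by simp)
        have hne0 : (((n : ℝ≥0∞)) + 1) ^ p ≠ 0 := by
          refine (ENNReal.rpow_pos ?_ (by simp)).ne'
          exact lt_of_lt_of_le one_pos (le_add_of_nonneg_left (zero_le))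
        calc ν (S (A n)) * (n : ℝ≥0∞) ^ p
            ≤ ((((n : ℝ≥0∞)) + 1) ^ p)⁻¹ * (((n : ℝ≥0∞)) + 1) ^ p :=
              mul_le_mul' (hT n) h1
          _ = 1 := ENNReal.inv_mul_cancel hne0 hne
      calc _ ≤ _ := step1
        _ ≤ _ := step2
        _ = _ := step3
        _ ≤ 1 := hle1
    unfold cesNorm
    calc (∫⁻ x in CesI l,
        (ENNReal.ofReal (w x) * ∫⁻ t in Set.Ioo 0 x, ENNReal.ofReal |g n t|) ^ p) ^ (1 / p)
        ≤ (1 : ℝ≥0∞) ^ (1 / p) := ENNReal.rpow_le_rpow hbound (by positivity)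
      _ = 1 := ENNReal.one_rpow _
  · -- L¹ norms tend to ⊤
    simp_rw [hL1]
    exact ENNReal.tendsto_nat_nhds_top
end
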